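/- Let G = (V, E) be a graph with |V| = 3t for some t ≥ 1. Define an instance of Seat Arrangement with agents P = V ∪ {x, y, z} (three new 'super' agents) and symmetric preferences: f_p(q) = 2 for distinct p, q ∈ {x, y, z}; f_p(q) = 1 whenever exactly one of p, q is in {x, y, z}; f_u(v) = 1 for u, v ∈ V with {u,v} ∈ E; and f_u(v) = 0 for u, v ∈ V with {u,v} ∉ E. Let the seat graph H be the disjoint union of t + 1 triangles. Then an envy-free arrangement exists in H if and only if V can be partitioned into t sets of size 3 each of which induces a triangle in G. -/

import Mathlib

open scoped Classical

noncomputable section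

namespace SeatArrangement

variable {P V : Type*}

/-- The utility of agent `p` under arrangement `π`:
the sum, over the seat-graph neighbors `v` of `π p`, of `p`'s preference for the agent seated
at `v`. -/
def utility [Fintype V] (G : SimpleGraph V) (f : P → P → ℝ) (π : P ≃ V) (p : P) : ℝ :=
  ∑ v : V, if G.Adj (π p) v then f p (π.symm v) else 0

/-- The social welfare of an arrangement: the sum of the utilities of all agents. -/
def sw [Fintype P] [Fintype V] (G : SimpleGraph V) (f : P → P → ℝ) (π : P ≃ V) : ℝ :=
  ∑ p : P, utility G f π p

/-- The `(p,q)`-swap arrangement of `π`. -/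
def swapArr (π : P ≃ V) (p q : P) : P ≃ V := (Equiv.swap p q).trans π

/-- `{p, q}` is a blocking pair for `π`: both agents strictly improve by swapping seats. -/
def blocking [Fintype V] (G : SimpleGraph V) (f : P → P → ℝ) (π : P ≃ V) (p q : P) : Prop :=
  p ≠ q ∧ utility G f π p < utility G f (swapArr π p q) p
        ∧ utility G f π q < utility G f (swapArr π p q) q

/-- An arrangement is stable if it has no blocking pair. -/
def stable [Fintype V] (G : SimpleGraph V) (f : P → P → ℝ) (π : P ≃ V) : Prop :=
  ∀ p q : P, ¬ blocking G f π p q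

/-- An arrangement is envy-free if no agent would strictly improve by taking
another agent's seat (via a swap). -/
def envyFree [Fintype V] (G : SimpleGraph V) (f : P → P → ℝ) (π : P ≃ V) : Prop :=
  ∀ p q : P, p ≠ q → utility G f (swapArr π p q) p ≤ utility G f π p

/-- The least utility of an agent under `π` (for a finite nonempty set of agents, the
infimum of the range of utilities is the minimum utility). -/
def minUtil [Fintype V] (G : SimpleGraph V) (f : P → P → ℝ) (π : P ≃ V) : ℝ :=
  sInf (Set.range (utility G f π))

/-- A maximin arrangement maximizes the least utility of an agent. -/
def maximin [Fintype V] (G : SimpleGraph V) (f : P → P → ℝ) (πf : P ≃ V) : Prop :=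
  ∀ π : P ≃ V, minUtil G f π ≤ minUtil G f πf

/-- A maximum arrangement maximizes the social welfare. -/
def maximum [Fintype P] [Fintype V] (G : SimpleGraph V) (f : P → P → ℝ) (πm : P ≃ V) : Prop :=
  ∀ π : P ≃ V, sw G f π ≤ sw G f πm

end SeatArrangement

open SeatArrangement

/-- Preferences for STATEMENT 12: agents are `V(G) ⊕ Fin 3`, where the three agents of
`Fin 3` are the super agents `x, y, z`. Super agents mutually have preference 2; a super
agent and an ordinary agent mutually have preference 1; two ordinary agents have mutual
preference 1 if they are adjacent in `G` and 0 otherwise. -/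
def prefs12 {W : Type*} (G : SimpleGraph W) : (W ⊕ Fin 3) → (W ⊕ Fin 3) → ℝ
  | .inr _, .inr _ => 2
  | .inr _, .inl _ => 1
  | .inl _, .inr _ => 1
  | .inl u, .inl v => if G.Adj u v then 1 else 0

/-- The disjoint union of `s` triangles. -/
def triangles (s : ℕ) : SimpleGraph (Fin s × Fin 3) where
  Adj x y := x.1 = y.1 ∧ x.2 ≠ y.2
  symm := by
    constructor
    rintro x y ⟨h1, h2⟩
    exact ⟨h1.symm, h2.symm⟩
  loopless := by
    constructor
    rintro x ⟨h1, h2⟩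
    exact h2 rfl


section H
variable {P : Type*} {W : Type*}

lemma card_compl_fin3 (j : Fin 3) : ({j}ᶜ : Finset (Fin 3)).card = 2 := by
  rw [Finset.card_compl]; simp

lemma utility_tri (s : ℕ) (f : P → P → ℝ) (π : P ≃ Fin s × Fin 3) (p : P) :
    utility (triangles s) f π p
      = ∑ k ∈ ({(π p).2}ᶜ : Finset (Fin 3)), f p (π.symm ((π p).1, k)) := by
  classical
  rw [utility, Fintype.sum_prod_type]
  have h1 : ∀ (i : Fin s) (k : Fin 3),
      (if (triangles s).Adj (π p) (i, k) then f p (π.symm (i, k)) else 0)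
      = if (π p).1 = i then (if (π p).2 ≠ k then f p (π.symm (i, k)) else 0) else 0 := by
    intro i k
    by_cases h : (π p).1 = i <;> by_cases h2 : (π p).2 ≠ k <;>
      simp [triangles, h, h2]
  simp_rw [h1]
  rw [Finset.sum_eq_single ((π p).1)]
  · simp only [eq_self_iff_true, if_true]
    rw [← Finset.sum_filter (fun k => (π p).2 ≠ k) (fun k => f p (π.symm ((π p).1, k)))]
    apply Finset.sum_congr
    · ext k
      simp only [Finset.mem_filter, Finset.mem_univ, true_and, Finset.mem_compl,
        Finset.mem_singleton]
      exact ne_comm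
    · intros; rfl
  · intro b _ hb
    simp [Ne.symm hb]
  · intro hmem
    exact absurd (Finset.mem_univ _) hmem

lemma swapArr_apply_left {V : Type*} (π : P ≃ V) (p q : P) : swapArr π p q p = π q := by
  simp [swapArr]

lemma swapArr_symm_apply {V : Type*} (π : P ≃ V) (p q : P) (v : V) :
    (swapArr π p q).symm v = Equiv.swap p q (π.symm v) := by
  simp [swapArr]

lemma utility_swap_ne (s : ℕ) (f : P → P → ℝ) (π : P ≃ Fin s × Fin 3) (p q : P)
    (h : (π p).1 ≠ (π q).1) :
    utility (triangles s) f (swapArr π p q) p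
      = ∑ k ∈ ({(π q).2}ᶜ : Finset (Fin 3)), f p (π.symm ((π q).1, k)) := by
  rw [utility_tri, swapArr_apply_left]
  apply Finset.sum_congr rfl
  intro k hk
  rw [swapArr_symm_apply]
  congr 1
  apply Equiv.swap_apply_of_ne_of_ne
  · intro he
    apply h
    have : π p = ((π q).1, k) := by rw [← he, Equiv.apply_symm_apply]
    rw [this]
  · intro he
    have : π q = ((π q).1, k) := by rw [← he, Equiv.apply_symm_apply]
    have h2 : (π q).2 = k := congrArg Prod.snd this
    simp only [Finset.mem_compl, Finset.mem_singleton] at hk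
    exact hk h2.symm

lemma prefs12_le_two (G : SimpleGraph W) (p q : W ⊕ Fin 3) : prefs12 G p q ≤ 2 := by
  rcases p with u | a <;> rcases q with v | b <;> simp [prefs12] <;> split <;> norm_num

lemma prefs12_inl_le_one (G : SimpleGraph W) (u : W) (q : W ⊕ Fin 3) :
    prefs12 G (.inl u) q ≤ 1 := by
  rcases q with v | b <;> simp [prefs12] <;> split <;> norm_num

lemma one_le_prefs12_inr (G : SimpleGraph W) (a : Fin 3) (q : W ⊕ Fin 3) :
    1 ≤ prefs12 G (.inr a) q := by
  rcases q with v | b <;> simp [prefs12] <;> norm_num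

lemma utility_inl_le (s : ℕ) (G : SimpleGraph W) (π : (W ⊕ Fin 3) ≃ Fin s × Fin 3) (u : W) :
    utility (triangles s) (prefs12 G) π (.inl u) ≤ 2 := by
  rw [utility_tri]
  calc ∑ k ∈ ({(π (.inl u)).2}ᶜ : Finset (Fin 3)), prefs12 G (.inl u) (π.symm ((π (.inl u)).1, k))
      ≤ ∑ _k ∈ ({(π (.inl u)).2}ᶜ : Finset (Fin 3)), (1:ℝ) :=
        Finset.sum_le_sum fun k _ => prefs12_inl_le_one G u _
    _ = 2 := by rw [Finset.sum_const, card_compl_fin3]; norm_num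

lemma utility_inr_le (s : ℕ) (G : SimpleGraph W) (π : (W ⊕ Fin 3) ≃ Fin s × Fin 3) (a : Fin 3) :
    utility (triangles s) (prefs12 G) π (.inr a) ≤ 4 := by
  rw [utility_tri]
  calc ∑ k ∈ ({(π (.inr a)).2}ᶜ : Finset (Fin 3)), prefs12 G (.inr a) (π.symm ((π (.inr a)).1, k))
      ≤ ∑ _k ∈ ({(π (.inr a)).2}ᶜ : Finset (Fin 3)), (2:ℝ) :=
        Finset.sum_le_sum fun k _ => prefs12_le_two G _ _
    _ = 4 := by rw [Finset.sum_const, card_compl_fin3]; norm_num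

end H

section Main
variable {W : Type*} [Fintype W] [DecidableEq W]

lemma sum_const_compl (j : Fin 3) (r : ℝ) :
    ∑ _k ∈ ({j}ᶜ : Finset (Fin 3)), r = 2 * r := by
  rw [Finset.sum_const, card_compl_fin3]
  simp [two_smul]; ring

lemma mpr_dir (G : SimpleGraph W) (t : ℕ) (hcard : Fintype.card W = 3 * t)
    (g : W → Fin t)
    (hc : ∀ c : Fin t, (Finset.univ.filter fun v => g v = c).card = 3)
    (hadj : ∀ u v : W, u ≠ v → g u = g v → G.Adj u v) :
    ∃ π : (W ⊕ Fin 3) ≃ (Fin (t + 1) × Fin 3),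
      envyFree (triangles (t + 1)) (prefs12 G) π := by
  classical
  have hclass : ∀ c, Fintype.card {v // g v = c} = 3 := by
    intro c; rw [Fintype.card_subtype]; exact hc c
  let e : (c : Fin t) → {v // g v = c} ≃ Fin 3 := fun c => Fintype.equivFinOfCardEq (hclass c)
  have hval : ∀ (c : Fin t) (j : Fin 3), g ((e c).symm j).val = c := fun c j => ((e c).symm j).2
  let σ : Fin (t+1) × Fin 3 → W ⊕ Fin 3 := fun x =>
    if h : x.1 = 0 then Sum.inr x.2 else Sum.inl ((e (x.1.pred h)).symm x.2).val
  have hσinj : Function.Injective σ := by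
    rintro ⟨a1, a2⟩ ⟨b1, b2⟩ hab
    simp only [σ] at hab
    by_cases ha : a1 = 0 <;> by_cases hb : b1 = 0
    · rw [dif_pos ha, dif_pos hb] at hab
      obtain rfl := Sum.inr.inj hab
      rw [Prod.mk.injEq]; exact ⟨ha.trans hb.symm, rfl⟩
    · rw [dif_pos ha, dif_neg hb] at hab; exact absurd hab (by simp)
    · rw [dif_neg ha, dif_pos hb] at hab; exact absurd hab (by simp)
    · rw [dif_neg ha, dif_neg hb] at hab
      have hw := Sum.inl.inj hab
      have hc1 : a1.pred ha = b1.pred hb := by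
        have h1 := hval (a1.pred ha) a2
        have h2 := hval (b1.pred hb) b2
        rw [← h1, ← h2, hw]
      have ha1 : a1 = b1 := by
        have h3 := congrArg Fin.succ hc1
        rwa [Fin.succ_pred, Fin.succ_pred] at h3
      subst ha1
      have h4 : (e (a1.pred ha)).symm a2 = (e (a1.pred hb)).symm b2 := Subtype.ext hw
      have h5 : a2 = b2 := (e (a1.pred ha)).symm.injective h4
      rw [h5]
  have hcards : Fintype.card (Fin (t+1) × Fin 3) = Fintype.card (W ⊕ Fin 3) := by
    simp [hcard]; ring
  have hσbij : Function.Bijective σ :=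
    (Fintype.bijective_iff_injective_and_card σ).mpr ⟨hσinj, hcards⟩
  let π : (W ⊕ Fin 3) ≃ (Fin (t + 1) × Fin 3) := (Equiv.ofBijective σ hσbij).symm
  have hsymm : ∀ x, π.symm x = σ x := fun x => rfl
  have hsymm0 : ∀ k : Fin 3, π.symm (0, k) = Sum.inr k := by
    intro k; rw [hsymm]; simp [σ]
  have hsymms : ∀ (c : Fin t) (k : Fin 3), π.symm (c.succ, k) = Sum.inl ((e c).symm k).val := by
    intro c k
    rw [hsymm]
    simp only [σ]
    rw [dif_neg (Fin.succ_ne_zero _)]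
  have hπinr : ∀ j : Fin 3, π (Sum.inr j) = (0, j) := by
    intro j
    have := hsymm0 j
    rw [← this, Equiv.apply_symm_apply]
  have hπinl : ∀ u : W, π (Sum.inl u) = ((g u).succ, e (g u) ⟨u, rfl⟩) := by
    intro u
    have h1 := hsymms (g u) (e (g u) ⟨u, rfl⟩)
    rw [Equiv.symm_apply_apply] at h1
    rw [← h1, Equiv.apply_symm_apply]
  refine ⟨π, ?_⟩
  intro p q hpq
  rcases p with u | a
  · refine le_trans (utility_inl_le _ G _ u) (le_of_eq ?_)
    rw [utility_tri]
    have h1 : (π (Sum.inl u)).1 = (g u).succ := by rw [hπinl]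
    have h2 : (π (Sum.inl u)).2 = e (g u) ⟨u, rfl⟩ := by rw [hπinl]
    rw [h1, h2]
    have hterm : ∀ k ∈ ({e (g u) ⟨u, rfl⟩}ᶜ : Finset (Fin 3)),
        prefs12 G (Sum.inl u) (π.symm ((g u).succ, k)) = 1 := by
      intro k hk
      simp only [Finset.mem_compl, Finset.mem_singleton] at hk
      rw [hsymms]
      have hne : ((e (g u)).symm k).val ≠ u := by
        intro h
        apply hk
        have : (e (g u)).symm k = ⟨u, rfl⟩ := Subtype.ext h
        rw [← this, Equiv.apply_symm_apply]
      have hA : G.Adj u ((e (g u)).symm k).val :=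
        hadj u _ (fun h => hne h.symm) (hval (g u) k).symm
      simp [prefs12, hA]
    rw [Finset.sum_congr rfl hterm, sum_const_compl]
    norm_num
  · refine le_trans (utility_inr_le _ G _ a) (le_of_eq ?_)
    rw [utility_tri]
    have h1 : (π (Sum.inr a)).1 = 0 := by rw [hπinr]
    have h2 : (π (Sum.inr a)).2 = a := by rw [hπinr]
    rw [h1, h2]
    have hterm : ∀ k ∈ ({a}ᶜ : Finset (Fin 3)),
        prefs12 G (Sum.inr a) (π.symm ((0 : Fin (t+1)), k)) = 2 := by
      intro k _
      rw [hsymm0]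
      rfl
    rw [Finset.sum_congr rfl hterm, sum_const_compl]
    norm_num

end Main

section Main2
variable {W : Type*} [Fintype W] [DecidableEq W]

lemma mp_dir (G : SimpleGraph W) (t : ℕ) (hcard : Fintype.card W = 3 * t)
    (π : (W ⊕ Fin 3) ≃ (Fin (t + 1) × Fin 3))
    (hEF : envyFree (triangles (t + 1)) (prefs12 G) π) :
    ∃ g : W → Fin t,
      (∀ c : Fin t, (Finset.univ.filter fun v => g v = c).card = 3) ∧
      (∀ u v : W, u ≠ v → g u = g v → G.Adj u v) := by
  classical
  -- key contradiction lemma: a lone super with another super elsewhere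
  have key : ∀ a b : Fin 3, (∀ j, j ≠ a → (π (.inr j)).1 ≠ (π (.inr a)).1) →
      (π (.inr b)).1 ≠ (π (.inr a)).1 → False := by
    intro a b hsole hba
    have hold : utility (triangles (t+1)) (prefs12 G) π (.inr a) = 2 := by
      rw [utility_tri]
      have hterm : ∀ k ∈ ({(π (Sum.inr a)).2}ᶜ : Finset (Fin 3)),
          prefs12 G (.inr a) (π.symm ((π (.inr a)).1, k)) = 1 := by
        intro k hk
        simp only [Finset.mem_compl, Finset.mem_singleton] at hk
        rcases hw : π.symm ((π (.inr a)).1, k) with u | j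
        · rfl
        · exfalso
          have hπj : π (.inr j) = ((π (.inr a)).1, k) := by
            rw [← hw, Equiv.apply_symm_apply]
          by_cases hja : j = a
          · subst hja
            exact hk (congrArg Prod.snd hπj).symm
          · exact hsole j hja (by rw [hπj])
      rw [Finset.sum_congr rfl hterm, sum_const_compl]
      norm_num
    obtain ⟨k₀, hk₀⟩ := exists_ne (π (Sum.inr b)).2
    set q := π.symm ((π (Sum.inr b)).1, k₀) with hqdef
    have hπq : π q = ((π (Sum.inr b)).1, k₀) := by
      rw [hqdef, Equiv.apply_symm_apply]
    have hq1 : (π q).1 = (π (Sum.inr b)).1 := by rw [hπq]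
    have hq2 : (π q).2 = k₀ := by rw [hπq]
    have hdiff : (π (Sum.inr a)).1 ≠ (π q).1 := by
      rw [hq1]; exact fun h => hba h.symm
    have hqa : (Sum.inr a : W ⊕ Fin 3) ≠ q := by
      intro h
      apply hdiff
      rw [← h]
    have hswap := hEF (Sum.inr a) q hqa
    rw [utility_swap_ne _ _ _ _ _ hdiff, hq1, hq2, hold] at hswap
    have hmem : (π (Sum.inr b)).2 ∈ ({k₀}ᶜ : Finset (Fin 3)) := by
      simp [Ne.symm hk₀]
    have hsum : (3:ℝ) ≤ ∑ k ∈ ({k₀}ᶜ : Finset (Fin 3)),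
        prefs12 G (.inr a) (π.symm ((π (Sum.inr b)).1, k)) := by
      rw [← Finset.add_sum_erase _ _ hmem]
      have h1 : π.symm ((π (Sum.inr b)).1, (π (Sum.inr b)).2) = Sum.inr b := by
        rw [Prod.mk.eta, Equiv.symm_apply_apply]
      rw [h1]
      have h2 : prefs12 G (.inr a) (.inr b) = 2 := rfl
      rw [h2]
      have hcarde : (({k₀}ᶜ : Finset (Fin 3)).erase (π (Sum.inr b)).2).card = 1 := by
        rw [Finset.card_erase_of_mem hmem, card_compl_fin3]
      have h3 : (1:ℝ) ≤ ∑ k ∈ (({k₀}ᶜ : Finset (Fin 3)).erase (π (Sum.inr b)).2),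
          prefs12 G (.inr a) (π.symm ((π (Sum.inr b)).1, k)) := by
        calc (1:ℝ) = (({k₀}ᶜ : Finset (Fin 3)).erase (π (Sum.inr b)).2).card • (1:ℝ) := by
              rw [hcarde]; simp
          _ ≤ _ := Finset.card_nsmul_le_sum _ _ _ (fun k _ => one_le_prefs12_inr G a _)
      linarith
    linarith
  -- step 1: all supers in one triangle
  have hsupers : ∀ j : Fin 3, (π (Sum.inr j)).1 = (π (Sum.inr 0)).1 := by
    by_contra h
    push_neg at h
    obtain ⟨j₁, hj₁⟩ := h
    have hj10 : j₁ ≠ 0 := fun h => hj₁ (by rw [h])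
    have hthird : ∀ (a : Fin 3), a ≠ 0 → ∃ c, c ≠ a ∧ c ≠ 0 := by decide
    obtain ⟨j₃, h31, h30⟩ := hthird j₁ hj10
    have henum : ∀ j : Fin 3, j = 0 ∨ j = j₁ ∨ j = j₃ := by
      have : ∀ (a c : Fin 3), a ≠ 0 → c ≠ a → c ≠ 0 → ∀ j, j = 0 ∨ j = a ∨ j = c := by decide
      exact this j₁ j₃ hj10 h31 h30
    by_cases hA : (π (Sum.inr j₃)).1 = (π (Sum.inr j₁)).1
    · refine key 0 j₁ ?_ hj₁
      intro j hj0
      rcases henum j with h | h | h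
      · exact absurd h hj0
      · rw [h]; exact hj₁
      · rw [h, hA]; exact hj₁
    · refine key j₁ 0 ?_ (Ne.symm hj₁)
      intro j hjj
      rcases henum j with h | h | h
      · rw [h]; exact Ne.symm hj₁
      · exact absurd h hjj
      · rw [h]; exact hA
  -- step 1b: the super triangle is fully occupied by supers
  have hsup_seat : ∀ k : Fin 3, ∃ j : Fin 3, π.symm ((π (Sum.inr 0)).1, k) = Sum.inr j := by
    have hinj : Function.Injective (fun j : Fin 3 => (π (Sum.inr j)).2) := by
      intro j j' hjj
      have h1 : π (Sum.inr j) = π (Sum.inr j') :=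
        Prod.ext ((hsupers j).trans (hsupers j').symm) hjj
      exact Sum.inr.inj (π.injective h1)
    have hsur := Finite.surjective_of_injective hinj
    intro k
    obtain ⟨j, hj⟩ := hsur k
    refine ⟨j, ?_⟩
    rw [Equiv.symm_apply_eq]
    refine (Prod.ext ?_ ?_).symm
    · exact hsupers j
    · exact hj
  have hord : ∀ u : W, (π (Sum.inl u)).1 ≠ (π (Sum.inr 0)).1 := by
    intro u h
    obtain ⟨j, hj⟩ := hsup_seat (π (Sum.inl u)).2
    rw [← h, Prod.mk.eta, Equiv.symm_apply_apply] at hj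
    exact absurd hj (by simp)
  -- step 2: same ordinary triangle implies adjacency
  have hstep2 : ∀ u v : W, u ≠ v → (π (.inl u)).1 = (π (.inl v)).1 → G.Adj u v := by
    intro u v huv hsame
    by_contra hna
    have h2ne : (π (.inl v)).2 ≠ (π (.inl u)).2 := by
      intro h
      apply huv
      have h1 : π (Sum.inl u) = π (Sum.inl v) := Prod.ext hsame h.symm
      exact Sum.inl.inj (π.injective h1)
    have hub : utility (triangles (t+1)) (prefs12 G) π (.inl u) ≤ 1 := by
      rw [utility_tri]
      have hmemv : (π (.inl v)).2 ∈ ({(π (.inl u)).2}ᶜ : Finset (Fin 3)) := by simp [h2ne]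
      rw [← Finset.add_sum_erase _ _ hmemv]
      have h1 : π.symm ((π (.inl u)).1, (π (.inl v)).2) = Sum.inl v := by
        rw [hsame, Prod.mk.eta, Equiv.symm_apply_apply]
      rw [h1]
      have h2 : prefs12 G (.inl u) (.inl v) = 0 := by simp [prefs12, hna]
      rw [h2]
      have hcarde : (({(π (.inl u)).2}ᶜ : Finset (Fin 3)).erase (π (.inl v)).2).card = 1 := by
        rw [Finset.card_erase_of_mem hmemv, card_compl_fin3]
      have h3 : ∑ k ∈ (({(π (.inl u)).2}ᶜ : Finset (Fin 3)).erase (π (.inl v)).2),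
          prefs12 G (.inl u) (π.symm ((π (.inl u)).1, k)) ≤ 1 := by
        calc _ ≤ (({(π (.inl u)).2}ᶜ : Finset (Fin 3)).erase (π (.inl v)).2).card • (1:ℝ) :=
              Finset.sum_le_card_nsmul _ _ _ (fun k _ => prefs12_inl_le_one G u _)
          _ = 1 := by rw [hcarde]; simp
      linarith
    have hdiff : (π (Sum.inl u)).1 ≠ (π (Sum.inr 0)).1 := hord u
    have hswap := hEF (Sum.inl u) (Sum.inr 0) (by simp)
    rw [utility_swap_ne _ _ _ _ _ hdiff] at hswap
    have hterm : ∀ k ∈ ({(π (Sum.inr 0)).2}ᶜ : Finset (Fin 3)),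
        prefs12 G (.inl u) (π.symm ((π (Sum.inr 0)).1, k)) = 1 := by
      intro k _
      obtain ⟨j, hj⟩ := hsup_seat k
      rw [hj]
      rfl
    rw [Finset.sum_congr rfl hterm, sum_const_compl] at hswap
    linarith
  -- step 3: build g
  have hcard_sub : Fintype.card {i : Fin (t+1) // i ≠ (π (Sum.inr 0)).1} = t := by
    rw [Fintype.card_subtype_compl, Fintype.card_subtype_eq]
    simp
  let E : {i : Fin (t+1) // i ≠ (π (Sum.inr 0)).1} ≃ Fin t := Fintype.equivFinOfCardEq hcard_sub
  refine ⟨fun u => E ⟨(π (.inl u)).1, hord u⟩, ?_, ?_⟩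
  · intro c
    have hgiff : ∀ u : W, (E ⟨(π (.inl u)).1, hord u⟩ = c) ↔ (π (.inl u)).1 = (E.symm c).val := by
      intro u
      constructor
      · intro h; rw [← h, Equiv.symm_apply_apply]
      · intro h
        have h1 : (⟨(π (.inl u)).1, hord u⟩ : {i // i ≠ (π (Sum.inr 0)).1}) = E.symm c :=
          Subtype.ext h
        rw [h1, Equiv.apply_symm_apply]
    have hfe : (Finset.univ.filter fun v => E ⟨(π (.inl v)).1, hord v⟩ = c)
        = (Finset.univ.filter fun v => (π (.inl v)).1 = (E.symm c).val) := by
      ext u; simp [hgiff u]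
    rw [hfe]
    have h3 : (Finset.univ : Finset (Fin 3)).card = 3 := by simp
    refine Eq.trans (Finset.card_bij (fun u _ => (π (Sum.inl u)).2) ?_ ?_ ?_) h3
    · intro u _; exact Finset.mem_univ _
    · intro u hu v hv h2
      simp only [Finset.mem_filter] at hu hv
      have h1 : π (Sum.inl u) = π (Sum.inl v) := Prod.ext (hu.2.trans hv.2.symm) h2
      exact Sum.inl.inj (π.injective h1)
    · intro k _
      rcases hw : π.symm ((E.symm c).val, k) with u | j
      · have hπu : π (Sum.inl u) = ((E.symm c).val, k) := by
          rw [← hw, Equiv.apply_symm_apply]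
        refine ⟨u, ?_, ?_⟩
        · simp only [Finset.mem_filter]
          exact ⟨Finset.mem_univ _, congrArg Prod.fst hπu⟩
        · show (π (Sum.inl u)).2 = k
          rw [hπu]
      · exfalso
        have hπj : π (Sum.inr j) = ((E.symm c).val, k) := by
          rw [← hw, Equiv.apply_symm_apply]
        exact (E.symm c).2 ((congrArg Prod.fst hπj).symm.trans (hsupers j))
  · intro u v huv hg
    apply hstep2 u v huv
    exact congrArg Subtype.val (E.injective hg)

end Main2

/-- for a graph `G` on `3t` vertices (`t ≥ 1`), with the above symmetric
preferences and the seat graph being the disjoint union of `t + 1` triangles, an envy-free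
arrangement exists if and only if `V(G)` can be partitioned into `t` sets of size 3, each
inducing a triangle in `G`. -/
theorem envyFree_iff_partition_into_triangles {W : Type*} [Fintype W] [DecidableEq W]
    (G : SimpleGraph W) (t : ℕ) (ht : 1 ≤ t) (hcard : Fintype.card W = 3 * t) :
    (∃ π : (W ⊕ Fin 3) ≃ (Fin (t + 1) × Fin 3),
      envyFree (triangles (t + 1)) (prefs12 G) π) ↔
    (∃ g : W → Fin t,
      (∀ c : Fin t, (Finset.univ.filter fun v => g v = c).card = 3) ∧
      (∀ u v : W, u ≠ v → g u = g v → G.Adj u v)) := by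
  constructor
  · rintro ⟨π, hEF⟩
    exact mp_dir G t hcard π hEF
  · rintro ⟨g, hc, hadj⟩
    exact mpr_dir G t hcard g hc hadj
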